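/- Let b > 1 be a real number. Then there do not exist real numbers a₂, a₃ such that the function f(r) := −r²/4 + a₂·log r + a₃ satisfies all four of the following: f'(1) = (b − 1)/2; f'(b) = −(b − 1)/2; f(1) + b·f(b) = 0; and ((b − 1)/(2b) − 1)·f(b) = (−(b − 1)/2 − 1)·f(1). -/

import Mathlib

open Real

private lemma aux_hasDerivAt (a₂ a₃ : ℝ) (x : ℝ) (hx : 0 < x) :
    HasDerivAt (fun r : ℝ => -r ^ 2 / 4 + a₂ * Real.log r + a₃)
      (-x / 2 + a₂ / x) x := by
  have h1 : HasDerivAt (fun r : ℝ => -r ^ 2 / 4) (-x / 2) x := by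
    have : HasDerivAt (fun y : ℝ => -(1/4 : ℝ) * y ^ 2) _ x := (hasDerivAt_pow 2 x).const_mul (-(1/4) : ℝ)
    convert this using 1
    · ext r; ring
    · simp; ring
  have h2 : HasDerivAt (fun r : ℝ => a₂ * Real.log r) (a₂ / x) x := by
    rw [div_eq_mul_inv]
    exact (Real.hasDerivAt_log hx.ne').const_mul a₂
  simpa using (h1.add h2).add_const a₃

private lemma log_lt_aux (b : ℝ) (hb : 1 < b) :
    Real.log b < (b ^ 2 - 1) / (2 * b) := by
  set g : ℝ → ℝ := fun x => Real.log x - x / 2 + (2 * x)⁻¹ with hg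
  have hder : ∀ x : ℝ, 1 < x → HasDerivAt g (1 / x - 1 / 2 - 2 / (2 * x) ^ 2) x := by
    intro x hx
    have hx0 : (0:ℝ) < x := by linarith
    have h1 : HasDerivAt (fun y : ℝ => Real.log y - y / 2) (1 / x - 1 / 2) x := by
      have := (Real.hasDerivAt_log hx0.ne').sub ((hasDerivAt_id' x).div_const 2)
      simp only [one_div] at this ⊢
      exact this
    have h2 : HasDerivAt (fun y : ℝ => (2 * y)⁻¹) (-(2 * 1) / (2 * x) ^ 2) x :=
      HasDerivAt.inv ((hasDerivAt_id x).const_mul (2:ℝ)) (by positivity)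
    have H := h1.add h2
    have he : (1 / x - 1 / 2 - 2 / (2 * x) ^ 2)
        = (1 / x - 1 / 2 + -(2 * 1) / (2 * x) ^ 2) := by ring
    rw [he, hg]
    exact H
  have hanti : StrictAntiOn g (Set.Ici (1:ℝ)) := by
    apply strictAntiOn_of_deriv_neg (convex_Ici 1)
    · apply ContinuousOn.add (ContinuousOn.sub ?_ ?_) ?_
      · refine Real.continuousOn_log.mono fun x hx => ?_
        have hx1 : (1:ℝ) ≤ x := hx
        simpa using (by positivity : x ≠ 0)
      · exact (continuous_id.div_const 2).continuousOn
      · apply ContinuousOn.inv₀ (by fun_prop)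
        intro x hx
        have hx1 : (1:ℝ) ≤ x := hx
        positivity
    · intro x hx
      rw [interior_Ici] at hx
      have hx1 : (1:ℝ) < x := hx
      have hx0 : (0:ℝ) < x := by linarith
      rw [(hder x hx1).deriv]
      have : 1 / x - 1 / 2 - 2 / (2 * x) ^ 2 = -((x - 1) ^ 2 / (2 * x ^ 2)) := by
        field_simp
        ring
      rw [this, neg_lt_zero]
      exact div_pos (pow_pos (by linarith) 2) (by positivity)
  have hlt := hanti (Set.self_mem_Ici) (Set.mem_Ici.mpr hb.le) hb
  have hg1 : g 1 = 0 := by simp [hg]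
  have hgb : g b = Real.log b - b / 2 + (2 * b)⁻¹ := rfl
  rw [hg1, hgb] at hlt
  have hb0 : (0:ℝ) < b := by linarith
  have heq : b / 2 - (2 * b)⁻¹ = (b ^ 2 - 1) / (2 * b) := by
    field_simp
  linarith

/-- No planar annulus `{1 < |x| < b} ⊂ ℝ²` is a stationary shape of the torsion energy
with boundary mean zero: there is no radial profile `f(r) = -r²/4 + a₂ log r + a₃`
satisfying simultaneously the constant Neumann conditions `f'(1) = (b-1)/2`,
`f'(b) = -(b-1)/2`, the vanishing boundary mean condition `f(1) + b f(b) = 0`, and the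
shape-stationarity condition `((b-1)/(2b) - 1) f(b) = (-(b-1)/2 - 1) f(1)`. -/
theorem stmt_16 (b : ℝ) (hb : 1 < b) :
    ¬∃ a₂ a₃ : ℝ, ∃ f : ℝ → ℝ,
      (∀ r : ℝ, f r = -r ^ 2 / 4 + a₂ * Real.log r + a₃) ∧
      deriv f 1 = (b - 1) / 2 ∧
      deriv f b = -(b - 1) / 2 ∧
      f 1 + b * f b = 0 ∧
      ((b - 1) / (2 * b) - 1) * f b = (-(b - 1) / 2 - 1) * f 1 := by
  rintro ⟨a₂, a₃, f, hf, h1, h2, h3, h4⟩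
  have hb0 : (0:ℝ) < b := by linarith
  have hfe : f = fun r : ℝ => -r ^ 2 / 4 + a₂ * Real.log r + a₃ := funext hf
  rw [hfe] at h1 h2
  rw [(aux_hasDerivAt a₂ a₃ 1 one_pos).deriv] at h1
  rw [(aux_hasDerivAt a₂ a₃ b hb0).deriv] at h2
  have ha₂ : a₂ = b / 2 := by
    field_simp at h1
    linarith
  have hfb : f b = b * f 1 := by
    field_simp at h4
    have key : (2 * (b + 1)) * f b = (2 * (b + 1)) * (b * f 1) := by
      linear_combination (-2) * h4
    exact mul_left_cancel₀ (by positivity) key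
  have hf1 : f 1 = 0 := by
    rw [hfb] at h3
    have hq : (1 + b * b) * f 1 = 0 := by linear_combination h3
    rcases mul_eq_zero.mp hq with h | h
    · nlinarith
    · exact h
  have hfb0 : f b = 0 := by rw [hfb, hf1, mul_zero]
  have ha₃ : a₃ = 1 / 4 := by
    have h := hf 1
    rw [hf1] at h
    simp at h
    linarith
  have hlog : Real.log b = (b ^ 2 - 1) / (2 * b) := by
    have h := hf b
    rw [hfb0, ha₂, ha₃] at h
    rw [eq_div_iff (by positivity : (2*b) ≠ 0)]
    linear_combination (-4 : ℝ) * h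
  exact absurd hlog (log_lt_aux b hb).ne
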